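/- (cos(2π/9))^(1/3) + (cos(4π/9))^(1/3) - (cos(π/9))^(1/3) = ( (3/2)·(9^(1/3) - 2) )^(1/3), where all powers are real powers of positive real numbers. -/

import Mathlib

open Real

lemma cube_inj : Function.Injective (fun x : ℝ => x ^ 3) :=
  (Odd.strictMono_pow (⟨1, by norm_num⟩ : Odd 3)).injective

lemma rpow_third_cube {x : ℝ} (hx : 0 ≤ x) : (x ^ ((1:ℝ)/3)) ^ 3 = x := by
  have h : (x ^ ((1:ℝ)/3)) ^ (3:ℕ) = (x ^ ((1:ℝ)/3)) ^ ((3:ℕ):ℝ) :=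
    (Real.rpow_natCast _ 3).symm
  rw [h, ← Real.rpow_mul hx]
  norm_num

set_option maxHeartbeats 2000000 in
theorem stmt_12 :
    (Real.cos (2 * Real.pi / 9)) ^ ((1 : ℝ) / 3) +
      (Real.cos (4 * Real.pi / 9)) ^ ((1 : ℝ) / 3) -
      (Real.cos (Real.pi / 9)) ^ ((1 : ℝ) / 3) =
      ((3 / 2 : ℝ) * ((9 : ℝ) ^ ((1 : ℝ) / 3) - 2)) ^ ((1 : ℝ) / 3) := by
  have pipos := Real.pi_pos
  set α := Real.cos (2 * Real.pi / 9) with hαdef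
  set β := Real.cos (4 * Real.pi / 9) with hβdef
  set γ := -Real.cos (Real.pi / 9) with hγdef
  -- cubic equations
  have hα3 : 8 * α ^ 3 - 6 * α + 1 = 0 := by
    have h1 := Real.cos_three_mul (2 * Real.pi / 9)
    have h2 : 3 * (2 * Real.pi / 9) = Real.pi - Real.pi / 3 := by ring
    rw [h2, Real.cos_pi_sub, Real.cos_pi_div_three] at h1
    rw [hαdef]; linarith
  have hβ3 : 8 * β ^ 3 - 6 * β + 1 = 0 := by
    have h1 := Real.cos_three_mul (4 * Real.pi / 9)
    have h2 : 3 * (4 * Real.pi / 9) = Real.pi + Real.pi / 3 := by ring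
    rw [h2, Real.cos_add, Real.cos_pi, Real.sin_pi, Real.cos_pi_div_three] at h1
    rw [hβdef]; linarith
  have hγ3 : 8 * γ ^ 3 - 6 * γ + 1 = 0 := by
    have h1 := Real.cos_three_mul (Real.pi / 9)
    have h2 : 3 * (Real.pi / 9) = Real.pi / 3 := by ring
    rw [h2, Real.cos_pi_div_three] at h1
    rw [hγdef]; ring_nf; ring_nf at h1; linarith
  -- positivity and ordering
  have hβpos : 0 < β := by
    apply Real.cos_pos_of_mem_Ioo
    constructor <;> [linarith; linarith]
  have hcpos : 0 < Real.cos (Real.pi / 9) := by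
    apply Real.cos_pos_of_mem_Ioo
    constructor <;> [linarith; linarith]
  have hαβ : β < α := by
    apply Real.cos_lt_cos_of_nonneg_of_le_pi <;> linarith
  have hγβ : γ < β := by rw [hγdef]; linarith
  have hγα : γ < α := by linarith
  -- Vieta
  have hA : (α - β) * (8 * (α^2 + α*β + β^2)) = (α - β) * 6 := by
    linear_combination hα3 - hβ3
  have hA' : 8 * (α^2 + α*β + β^2) = 6 :=
    mul_left_cancel₀ (sub_ne_zero.mpr (ne_of_gt hαβ)) hA
  have hB : (β - γ) * (8 * (β^2 + β*γ + γ^2)) = (β - γ) * 6 := by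
    linear_combination hβ3 - hγ3
  have hB' : 8 * (β^2 + β*γ + γ^2) = 6 :=
    mul_left_cancel₀ (sub_ne_zero.mpr (ne_of_gt hγβ)) hB
  have he1' : (α - γ) * (α + β + γ) = (α - γ) * 0 := by
    linear_combination (1/8 : ℝ) * hA' - (1/8 : ℝ) * hB'
  have e1 : α + β + γ = 0 :=
    mul_left_cancel₀ (sub_ne_zero.mpr (ne_of_gt hγα)) he1'
  have e2 : α*β + β*γ + γ*α = -3/4 := by
    linear_combination (α + β) * e1 - (1/8 : ℝ) * hA'
  have e3 : α * β * γ = -1/8 := by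
    linear_combination (1/24 : ℝ) * (hα3 + hβ3 + hγ3) +
      (1/4 - (α^2+β^2+γ^2-α*β-β*γ-γ*α)/3) * e1
  -- cube roots
  set u := α ^ ((1:ℝ)/3) with hu
  set v := β ^ ((1:ℝ)/3) with hv
  set w := -(Real.cos (Real.pi / 9) ^ ((1:ℝ)/3)) with hw
  have hu3 : u ^ 3 = α := rpow_third_cube (by linarith)
  have hv3 : v ^ 3 = β := rpow_third_cube (by linarith)
  have hw3 : w ^ 3 = γ := by
    rw [hw, hγdef,
      show (-(Real.cos (Real.pi/9) ^ ((1:ℝ)/3)))^3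
          = -((Real.cos (Real.pi/9) ^ ((1:ℝ)/3))^3) by ring,
      rpow_third_cube hcpos.le]
  have huvw : u * v * w = -1/2 := by
    apply cube_inj
    show (u*v*w)^3 = (-1/2 : ℝ)^3
    have h : (u*v*w)^3 = u^3 * v^3 * w^3 := by ring
    rw [h, hu3, hv3, hw3, e3]; norm_num
  set p := u + v + w with hp
  set q := u*v + v*w + w*u with hq
  have eqP : p ^ 3 - 3*p*q - 3/2 = 0 := by
    have h : u^3 + v^3 + w^3 = 0 := by rw [hu3, hv3, hw3]; exact e1
    linear_combination h - 3 * huvw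
  have eqQ : q ^ 3 + (3/2)*p*q + 3/2 = 0 := by
    have h1 : (u*v)^3 + (v*w)^3 + (w*u)^3 = -3/4 := by
      have h : (u*v)^3 + (v*w)^3 + (w*u)^3 = u^3*v^3 + v^3*w^3 + w^3*u^3 := by ring
      rw [h, hu3, hv3, hw3]; linarith [e2]
    linear_combination h1 + (3*p*q - 3*(u*v*w) + 3/2) * huvw
  have hcube : (p^3 + 3)^3 = 243/8 := by
    linear_combination ((p^3 - 3*p*q - 3/2)^2 + 3*(p^3 - 3*p*q - 3/2)*(3*p*q + 9/2)
        + 3*(3*p*q + 9/2)^2 - (81/2)*p*q - 81/2) * eqP + (27*p^3) * eqQ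
  set t := (9:ℝ) ^ ((1:ℝ)/3) with ht
  have ht3 : t ^ 3 = 9 := rpow_third_cube (by norm_num)
  have hp3 : p ^ 3 = 3/2 * (t - 2) := by
    have h9 : ((3/2 : ℝ) * t)^3 = 243/8 := by
      have h : ((3/2:ℝ)*t)^3 = 27/8 * t^3 := by ring
      rw [h, ht3]; norm_num
    have h := cube_inj (show (p^3+3)^3 = ((3/2:ℝ)*t)^3 by rw [hcube, h9])
    linarith
  have htnn : 0 ≤ t := Real.rpow_nonneg (by norm_num) _
  have ht2 : 2 ≤ t := by
    by_contra h
    push_neg at h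
    have h8 := pow_lt_pow_left₀ h htnn (by norm_num : 3 ≠ 0)
    rw [ht3] at h8; norm_num at h8
  have hppos : 0 ≤ p := by
    have h3 : (0:ℝ) ≤ p ^ 3 := by rw [hp3]; linarith
    exact (Odd.pow_nonneg_iff ⟨1, by norm_num⟩).mp h3
  have final : ((3/2 : ℝ) * (t - 2)) ^ ((1:ℝ)/3) = p := by
    rw [← hp3, ← Real.rpow_natCast p 3, ← Real.rpow_mul hppos,
      show ((3:ℕ):ℝ) * (1/3) = 1 by norm_num, Real.rpow_one]
  show u + v - Real.cos (Real.pi/9) ^ ((1:ℝ)/3) = ((3/2:ℝ) * (t - 2)) ^ ((1:ℝ)/3)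
  rw [final, hp, hw]; ring
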